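/- Suppose 𝓜 is an MS-measurable structure, S₁,…,S_n are infinite parameter-definable sets, S = S₁ × … × S_n, I ⊆ V = {1,…,n}, S_I is the product of the S_i for i ∈ I, and π_I : S → S_I is the projection. Then the push-forward of ν^S under π_I agrees with ν^{S_I} on definable sets: for every definable D ⊆ S_I, ν^S(π_I⁻¹(D)) = ν^{S_I}(D). -/

import Mathlib

open FirstOrder Set

namespace MeasureAmalgamation

/-- An MS-measuring function (Macpherson–Steinhorn measurability, Definition 4.1):
a dimension-measure function `h = (dim, μ)` on the parameter-definable subsets of the
finite powers of `M` satisfying: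
(i) nonempty finite sets get `h(X) = (0, |X|)`;
(ii) each formula `φ(x̄, ȳ)` yields only finitely many values `h(φ(x̄, ā))`, each on an
`∅`-definable set of parameters `ā`;
(iii) the Fubini property for definable surjections.
The measure is normalised so that `μ(M) = 1`, and extended by `μ(∅) = 0`;
`μ` takes positive values on nonempty definable sets. -/
structure MSMeasuring (L : FirstOrder.Language) (M : Type*) [L.Structure M] where
  /-- the dimension of a definable set -/
  dim : ∀ {α : Type} [Fintype α], Set (α → M) → ℕ
  /-- the measure of a definable set -/
  mu : ∀ {α : Type} [Fintype α], Set (α → M) → ℝ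
  /-- `h` takes values in `ℕ × ℝ^{>0}` on nonempty definable sets -/
  mu_pos : ∀ {α : Type} [Fintype α] (X : Set (α → M)),
    (Set.univ : Set M).Definable L X → X.Nonempty → 0 < mu X
  /-- `μ(∅) = 0` -/
  mu_empty : ∀ {α : Type} [Fintype α], mu (∅ : Set (α → M)) = 0
  /-- normalisation: `μ(M) = 1` -/
  mu_norm : mu (Set.univ : Set (Fin 1 → M)) = 1
  /-- (i): nonempty finite sets `X` have `h(X) = (0, |X|)` -/
  finite_case : ∀ {α : Type} [Fintype α] (X : Set (α → M)),
    (Set.univ : Set M).Definable L X → X.Nonempty → X.Finite →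
      dim X = 0 ∧ mu X = X.ncard
  /-- (ii), finiteness of the set of values `h(φ(x̄, ā))` -/
  finite_values : ∀ {α β : Type} [Fintype α] [Fintype β] (φ : L.Formula (α ⊕ β)),
    {v : ℕ × ℝ | ∃ b : β → M,
      {x : α → M | φ.Realize (Sum.elim x b)}.Nonempty ∧
      v = (dim {x : α → M | φ.Realize (Sum.elim x b)},
           mu {x : α → M | φ.Realize (Sum.elim x b)})}.Finite
  /-- (ii), `∅`-definability of the set of parameters giving a fixed value -/
  definable_values : ∀ {α β : Type} [Fintype α] [Fintype β]
    (φ : L.Formula (α ⊕ β)) (v : ℕ × ℝ),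
    (∅ : Set M).Definable L
      {b : β → M | {x : α → M | φ.Realize (Sum.elim x b)}.Nonempty ∧
        (dim {x : α → M | φ.Realize (Sum.elim x b)},
         mu {x : α → M | φ.Realize (Sum.elim x b)}) = v}
  /-- (iii): the Fubini property for definable surjections -/
  fubini : ∀ {α β : Type} [Fintype α] [Fintype β]
    (X : Set (α → M)) (Y : Set (β → M)) (f : (α → M) → (β → M)),
    X.Nonempty →
    (Set.univ : Set M).Definable L X →
    (Set.univ : Set M).Definable L Y →
    (Set.univ : Set M).Definable L
      {p : α ⊕ β → M | (p ∘ Sum.inl) ∈ X ∧ f (p ∘ Sum.inl) = p ∘ Sum.inr} →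
    f '' X = Y →
    ∀ (r : ℕ) (Ys : Fin r → Set (β → M)) (d e : Fin r → ℕ) (mf nf : Fin r → ℝ),
      (∀ i, (Ys i).Nonempty) →
      (∀ i, (Set.univ : Set M).Definable L (Ys i)) →
      (∀ i j, i ≠ j → Disjoint (Ys i) (Ys j)) →
      (⋃ i, Ys i) = Y →
      (∀ i, ∀ y ∈ Ys i, dim (f ⁻¹' {y} ∩ X) = d i ∧ mu (f ⁻¹' {y} ∩ X) = mf i) →
      (∀ i, dim (Ys i) = e i ∧ mu (Ys i) = nf i) →
      ∀ c : ℕ, (∀ i, d i + e i ≤ c) → (∃ i, d i + e i = c) →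
        dim X = c ∧
        mu X = ∑ i ∈ Finset.univ.filter (fun i => d i + e i = c), mf i * nf i

/-- The normalised measure `ν^S` on definable subsets of an infinite definable set `S`:
`ν^S(D) = μ(D)/μ(S)` if `dim D = dim S`, and `ν^S(D) = 0` otherwise. -/
noncomputable def MSMeasuring.nu {L : FirstOrder.Language} {M : Type*} [L.Structure M]
    (h : MSMeasuring L M) {α : Type} [Fintype α] (S D : Set (α → M)) : ℝ :=
  if h.dim D = h.dim S then h.mu D / h.mu S else 0

/-- A subset of `M` viewed as a subset of the power `M^{Fin 1}`. -/
def toDef1 (M : Type*) (s : Set M) : Set (Fin 1 → M) := {x | x 0 ∈ s}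

/-- The product `S = S₁ × … × S_n` inside `M^n`. -/
def prodSet {M : Type*} {n : ℕ} (Si : Fin n → Set M) : Set (Fin n → M) :=
  {x | ∀ i, x i ∈ Si i}

/-- The product `S_I` of the `S_i` for `i ∈ I`. -/
def prodSetOn {M : Type*} {n : ℕ} (Si : Fin n → Set M) (I : Finset (Fin n)) :
    Set (↥I → M) := {x | ∀ i : ↥I, x i ∈ Si i.val}

/-- The projection `π_I : M^n → M^I`. -/
def projI {M : Type*} {n : ℕ} (I : Finset (Fin n)) (x : Fin n → M) : ↥I → M :=
  fun i => x ↑i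

/-- Algebraic closure: `b ∈ acl(Z)` iff `b` belongs to some finite `Z`-definable set. -/
def inAcl (L : FirstOrder.Language) {M : Type*} [L.Structure M] (Z : Set M) (b : M) :
    Prop :=
  ∃ s : Set M, b ∈ s ∧ s.Finite ∧ Z.Definable L (toDef1 M s)


section Aux

variable {L : FirstOrder.Language} {M : Type*} [L.Structure M]

lemma definable_coord_eq_const {α : Type} [Fintype α] (i : α) (m : M) :
    (Set.univ : Set M).Definable L {x : α → M | x i = m} := by
  refine ⟨Language.Term.equal (Language.Term.var i)
    ((L.con (⟨m, Set.mem_univ m⟩ : (Set.univ : Set M))).term), ?_⟩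
  ext x
  simp [Language.Formula.realize_equal]

lemma definable_coord_eq_coord {α : Type} [Fintype α] (i j : α) :
    (Set.univ : Set M).Definable L {x : α → M | x i = x j} := by
  refine ⟨Language.Term.equal (Language.Term.var i) (Language.Term.var j), ?_⟩
  ext x
  simp [Language.Formula.realize_equal]

lemma definable_singleton' {α : Type} [Fintype α] (a : α → M) :
    (Set.univ : Set M).Definable L ({a} : Set (α → M)) := by
  have : ({a} : Set (α → M)) = ⋂ i ∈ Finset.univ, {x : α → M | x i = a i} := by
    ext x; simp [funext_iff]
  rw [this]
  exact Set.definable_biInter_finset (fun i => definable_coord_eq_const i (a i)) _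

lemma definable_coord_mem {α : Type} [Fintype α] {s : Set M}
    (hs : (Set.univ : Set M).Definable L (toDef1 M s)) (i : α) :
    (Set.univ : Set M).Definable L {x : α → M | x i ∈ s} := by
  have := hs.preimage_comp (fun _ : Fin 1 => i)
  convert this using 1
  rfl

/-- Fubini with a single piece and constant fibers. -/
lemma MSMeasuring.const_fiber (h : MSMeasuring L M) {α β : Type} [Fintype α] [Fintype β]
    (X : Set (α → M)) (Y : Set (β → M)) (f : (α → M) → (β → M))
    (hXne : X.Nonempty)
    (hXdef : (Set.univ : Set M).Definable L X)
    (hYdef : (Set.univ : Set M).Definable L Y)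
    (hGdef : (Set.univ : Set M).Definable L
      {p : α ⊕ β → M | (p ∘ Sum.inl) ∈ X ∧ f (p ∘ Sum.inl) = p ∘ Sum.inr})
    (hfX : f '' X = Y)
    (d : ℕ) (m : ℝ)
    (hfib : ∀ y ∈ Y, h.dim (f ⁻¹' {y} ∩ X) = d ∧ h.mu (f ⁻¹' {y} ∩ X) = m) :
    h.dim X = d + h.dim Y ∧ h.mu X = m * h.mu Y := by
  have hYne : Y.Nonempty := hfX ▸ hXne.image f
  have key := h.fubini X Y f hXne hXdef hYdef hGdef hfX 1 (fun _ => Y) (fun _ => d)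
    (fun _ => h.dim Y) (fun _ => m) (fun _ => h.mu Y) (fun _ => hYne) (fun _ => hYdef)
    (fun i j hij => absurd (Subsingleton.elim i j) hij)
    (Set.iUnion_const Y) (fun _ => hfib) (fun _ => ⟨rfl, rfl⟩) (d + h.dim Y)
    (fun _ => le_refl _) ⟨0, rfl⟩
  refine ⟨key.1, ?_⟩
  rw [key.2]
  simp

/-- `h` is invariant under definable bijections. -/
lemma MSMeasuring.bij_invariant (h : MSMeasuring L M) {α β : Type} [Fintype α] [Fintype β]
    (X : Set (α → M)) (Y : Set (β → M)) (f : (α → M) → (β → M))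
    (hXne : X.Nonempty)
    (hXdef : (Set.univ : Set M).Definable L X)
    (hYdef : (Set.univ : Set M).Definable L Y)
    (hGdef : (Set.univ : Set M).Definable L
      {p : α ⊕ β → M | (p ∘ Sum.inl) ∈ X ∧ f (p ∘ Sum.inl) = p ∘ Sum.inr})
    (hfX : f '' X = Y) (hinj : Set.InjOn f X) :
    h.dim X = h.dim Y ∧ h.mu X = h.mu Y := by
  have key := h.const_fiber X Y f hXne hXdef hYdef hGdef hfX 0 1 ?_
  · simpa using key
  · intro y hy
    obtain ⟨x₀, hx₀X, hx₀⟩ := hfX ▸ hy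
    have hsing : f ⁻¹' {y} ∩ X = {x₀} := by
      ext z
      constructor
      · rintro ⟨hz1, hz2⟩
        exact hinj hz2 hx₀X (by simpa [hx₀] using hz1)
      · rintro rfl
        exact ⟨by simp [hx₀], hx₀X⟩
    rw [hsing]
    have := h.finite_case ({x₀} : Set (α → M)) (definable_singleton' x₀)
      (Set.singleton_nonempty x₀) (Set.finite_singleton x₀)
    simpa using this

end Aux

/-- In an MS-measurable structure, with `S = S₁ × … × S_n`, `I ⊆ V` and
`π_I : S → S_I` the projection, the push-forward of `ν^S` under `π_I` agrees with
`ν^{S_I}` on definable sets: `ν^S(π_I⁻¹(D)) = ν^{S_I}(D)` for definable `D ⊆ S_I`. -/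
theorem nu_pushforward
    (L : FirstOrder.Language) (M : Type*) [L.Structure M]
    (h : MSMeasuring L M)
    (n : ℕ) (Si : Fin n → Set M)
    (hinf : ∀ i, (Si i).Infinite)
    (hdef : ∀ i, (Set.univ : Set M).Definable L (toDef1 M (Si i)))
    (I : Finset (Fin n)) (D : Set (↥I → M))
    (hDdef : (Set.univ : Set M).Definable L D)
    (hDsub : D ⊆ prodSetOn Si I) :
    h.nu (prodSet Si) (projI I ⁻¹' D ∩ prodSet Si) = h.nu (prodSetOn Si I) D := by
  classical
  set S := prodSet Si with hS
  set T := prodSetOn Si I with hT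
  set W := prodSetOn Si Iᶜ with hW
  -- definability of S, T, W
  have hSdef : (Set.univ : Set M).Definable L S := by
    have hrw : S = ⋂ i ∈ (Finset.univ : Finset (Fin n)), {x : Fin n → M | x i ∈ Si i} := by
      ext x; simp [hS, prodSet]
    rw [hrw]
    exact Set.definable_biInter_finset (fun i => definable_coord_mem (hdef i) i) _
  have hTdef : (Set.univ : Set M).Definable L T := by
    have hrw : T = ⋂ i ∈ (Finset.univ : Finset ↥I), {x : ↥I → M | x i ∈ Si ↑i} := by
      ext x; simp [hT, prodSetOn]
    rw [hrw]
    exact Set.definable_biInter_finset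
      (fun (i : ↥I) => definable_coord_mem (hdef ↑i) i) _
  have hWdef : (Set.univ : Set M).Definable L W := by
    have hrw : W = ⋂ i ∈ (Finset.univ : Finset ↥(Iᶜ)), {x : ↥(Iᶜ) → M | x i ∈ Si ↑i} := by
      ext x; simp [hW, prodSetOn]
    rw [hrw]
    exact Set.definable_biInter_finset
      (fun (i : ↥(Iᶜ)) => definable_coord_mem (hdef ↑i) i) _
  -- a choice of elements
  have hpick : ∀ i, ∃ m, m ∈ Si i := fun i => (hinf i).nonempty
  choose pick hpickmem using hpick
  -- the extension map
  set ext : (↥I → M) → (Fin n → M) :=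
    fun y i => if hi : i ∈ I then y ⟨i, hi⟩ else pick i with hext
  have hextS : ∀ y ∈ T, ext y ∈ S := by
    intro y hy i
    by_cases hi : i ∈ I
    · simp only [hext, dif_pos hi]
      exact hy ⟨i, hi⟩
    · simp only [hext, dif_neg hi]
      exact hpickmem i
  have hextProj : ∀ y, projI I (ext y) = y := by
    intro y
    funext i
    simp only [projI, hext, i.2, dif_pos]
  have hWne : W.Nonempty := ⟨fun j => pick ↑j, fun j => hpickmem ↑j⟩
  have hSne : S.Nonempty := ⟨pick, fun i => hpickmem i⟩
  have hTne : T.Nonempty := ⟨fun i => pick ↑i, fun i => hpickmem ↑i⟩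
  -- the fibers of projI over points of T all have the value h(W)
  have hfiber : ∀ y ∈ T, h.dim (projI I ⁻¹' {y} ∩ S) = h.dim W ∧
      h.mu (projI I ⁻¹' {y} ∩ S) = h.mu W := by
    intro y hy
    set F : Set (Fin n → M) := projI I ⁻¹' {y} ∩ S with hF
    set ρ : (Fin n → M) → (↥(Iᶜ) → M) := fun x j => x ↑j with hρ
    have hFdef : (Set.univ : Set M).Definable L F := by
      have hrw : projI I ⁻¹' {y} =
          ⋂ i ∈ (Finset.univ : Finset ↥I), {x : Fin n → M | x ↑i = y i} := by
        ext x
        simp only [Set.mem_preimage, Set.mem_singleton_iff, Set.mem_iInter, Set.mem_setOf_eq,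
          Finset.mem_univ, iInter_true]
        constructor
        · intro hxy i; exact congrFun hxy i
        · intro hall; funext i; exact hall i
      rw [hF, hrw]
      exact (Set.definable_biInter_finset
        (fun (i : ↥I) => definable_coord_eq_const (↑i : Fin n) (y i)) _).inter hSdef
    have hFne : F.Nonempty := ⟨ext y, by simp [hF, hextProj y], hextS y hy⟩
    have hGdef : (Set.univ : Set M).Definable L
        {p : Fin n ⊕ ↥(Iᶜ) → M | (p ∘ Sum.inl) ∈ F ∧ ρ (p ∘ Sum.inl) = p ∘ Sum.inr} := by
      have hrw : {p : Fin n ⊕ ↥(Iᶜ) → M | (p ∘ Sum.inl) ∈ F ∧ ρ (p ∘ Sum.inl) = p ∘ Sum.inr}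
          = ((fun g : Fin n ⊕ ↥(Iᶜ) → M => g ∘ Sum.inl) ⁻¹' F) ∩
            ⋂ j ∈ (Finset.univ : Finset ↥(Iᶜ)),
              {p : Fin n ⊕ ↥(Iᶜ) → M | p (Sum.inl ↑j) = p (Sum.inr j)} := by
        ext p
        simp only [Set.mem_setOf_eq, Set.mem_inter_iff, Set.mem_preimage, Set.mem_iInter,
          Finset.mem_univ, iInter_true]
        refine and_congr_right fun _ => ?_
        constructor
        · intro hpq j; exact congrFun hpq j
        · intro hall; funext j; exact hall j
      rw [hrw]
      exact (hFdef.preimage_comp Sum.inl).inter (Set.definable_biInter_finset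
        (fun (j : ↥(Iᶜ)) => definable_coord_eq_coord (Sum.inl (↑j : Fin n)) (Sum.inr j)) _)
    have himg : ρ '' F = W := by
      apply Set.Subset.antisymm
      · rintro w ⟨x, ⟨_, hxS⟩, rfl⟩ j
        exact hxS ↑j
      · intro w hw
        refine ⟨fun i => if hi : i ∈ I then y ⟨i, hi⟩
          else w ⟨i, Finset.mem_compl.mpr hi⟩, ⟨?_, ?_⟩, ?_⟩
        · show projI I _ = y
          funext i
          simp only [projI, i.2, dif_pos]
        · intro i
          by_cases hi : i ∈ I
          · simpa only [dif_pos hi] using hy ⟨i, hi⟩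
          · simpa only [dif_neg hi] using hw ⟨i, Finset.mem_compl.mpr hi⟩
        · funext j
          have hj : (↑j : Fin n) ∉ I := Finset.mem_compl.mp j.2
          simp only [hρ, dif_neg hj]
    have hinj : Set.InjOn ρ F := by
      intro a ha b hb hab
      have hay : projI I a = y := ha.1
      have hby : projI I b = y := hb.1
      funext i
      by_cases hi : i ∈ I
      · have h1 : a i = y ⟨i, hi⟩ := congrFun hay ⟨i, hi⟩
        have h2 : b i = y ⟨i, hi⟩ := congrFun hby ⟨i, hi⟩
        rw [h1, h2]
      · exact congrFun hab ⟨i, Finset.mem_compl.mpr hi⟩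
    exact h.bij_invariant F W ρ hFne hFdef hWdef hGdef himg hinj
  -- definability of graphs of projI restricted to a definable X
  have hgraph : ∀ X : Set (Fin n → M), (Set.univ : Set M).Definable L X →
      (Set.univ : Set M).Definable L
        {p : Fin n ⊕ ↥I → M | (p ∘ Sum.inl) ∈ X ∧ projI I (p ∘ Sum.inl) = p ∘ Sum.inr} := by
    intro X hX
    have hrw : {p : Fin n ⊕ ↥I → M | (p ∘ Sum.inl) ∈ X ∧ projI I (p ∘ Sum.inl) = p ∘ Sum.inr}
        = ((fun g : Fin n ⊕ ↥I → M => g ∘ Sum.inl) ⁻¹' X) ∩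
          ⋂ i ∈ (Finset.univ : Finset ↥I),
            {p : Fin n ⊕ ↥I → M | p (Sum.inl ↑i) = p (Sum.inr i)} := by
      ext p
      simp only [Set.mem_setOf_eq, Set.mem_inter_iff, Set.mem_preimage, Set.mem_iInter,
        Finset.mem_univ, iInter_true]
      refine and_congr_right fun _ => ?_
      constructor
      · intro hpq i; exact congrFun hpq i
      · intro hall; funext i; exact hall i
    rw [hrw]
    exact (hX.preimage_comp Sum.inl).inter (Set.definable_biInter_finset
      (fun (i : ↥I) => definable_coord_eq_coord (Sum.inl (↑i : Fin n)) (Sum.inr i)) _)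
  -- Fubini for S over T
  have himgS : projI I '' S = T := by
    apply Set.Subset.antisymm
    · rintro y ⟨x, hxS, rfl⟩ i
      exact hxS ↑i
    · intro y hy
      exact ⟨ext y, hextS y hy, hextProj y⟩
  have ha := h.const_fiber S T (projI I) hSne hSdef hTdef (hgraph S hSdef) himgS
    (h.dim W) (h.mu W) hfiber
  -- the empty case
  rcases D.eq_empty_or_nonempty with rfl | hDne
  · simp [MSMeasuring.nu, h.mu_empty]
  -- Fubini for X over D
  set X : Set (Fin n → M) := projI I ⁻¹' D ∩ S with hX
  have hXdef : (Set.univ : Set M).Definable L X := by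
    have hpre : projI I ⁻¹' D = (fun g : Fin n → M => g ∘ Subtype.val) ⁻¹' D := rfl
    rw [hX, hpre]
    exact (hDdef.preimage_comp Subtype.val).inter hSdef
  have hXne : X.Nonempty := by
    obtain ⟨y, hy⟩ := hDne
    exact ⟨ext y, by simp [hX, hextProj y, hy], hextS y (hDsub hy)⟩
  have himgX : projI I '' X = D := by
    apply Set.Subset.antisymm
    · rintro y ⟨x, ⟨hxD, _⟩, rfl⟩
      exact hxD
    · intro y hy
      exact ⟨ext y, ⟨by simp [hextProj y, hy], hextS y (hDsub hy)⟩, hextProj y⟩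
  have hfibX : ∀ y ∈ D, h.dim (projI I ⁻¹' {y} ∩ X) = h.dim W ∧
      h.mu (projI I ⁻¹' {y} ∩ X) = h.mu W := by
    intro y hy
    have hrw : projI I ⁻¹' {y} ∩ X = projI I ⁻¹' {y} ∩ S := by
      ext z
      simp only [hX, Set.mem_inter_iff, Set.mem_preimage, Set.mem_singleton_iff]
      constructor
      · rintro ⟨h1, _, h3⟩; exact ⟨h1, h3⟩
      · rintro ⟨h1, h2⟩; exact ⟨h1, h1 ▸ hy, h2⟩
    rw [hrw]
    exact hfiber y (hDsub hy)
  have hb := h.const_fiber X D (projI I) hXne hXdef hDdef (hgraph X hXdef) himgX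
    (h.dim W) (h.mu W) hfibX
  -- conclusion
  have hm₀ : h.mu W ≠ 0 := ne_of_gt (h.mu_pos W hWdef hWne)
  simp only [MSMeasuring.nu, ← hX, hb.1, ha.1, hb.2, ha.2, add_right_inj,
    mul_div_mul_left _ _ hm₀]

end MeasureAmalgamation
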